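/- Let f, g ∈ H¹ of the circle [0,2π] be real-valued, let ν ∈ [0,1] and k ∈ ℤ. Then |⟨f e_k, g⟩|² ≤ C (1 ∧ |k|^{-2ν}) (‖f‖ ‖g‖)^{2-2ν} (‖f‖_{H¹} ‖g‖_{H¹})^{2ν}, where e_k(x) = e^{ikx}, ⟨·,·⟩ is the normalized L² inner product, and C is a constant independent of f, g, k, ν. -/

import Mathlib

open MeasureTheory Real Filter

/-- `k`-th Fourier coefficient of a `2π`-periodic function, with the normalized measure. -/
noncomputable def fCoef (f : ℝ → ℂ) (n : ℤ) : ℂ :=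
  (1 / (2 * π) : ℂ) * ∫ x in (0:ℝ)..(2 * π), f x * Complex.exp (-Complex.I * n * x)

/-- normalized L² norm on [0,2π] -/
noncomputable def nL2 (f : ℝ → ℂ) : ℝ :=
  Real.sqrt ((1 / (2 * π)) * ∫ x in (0:ℝ)..(2 * π), ‖f x‖ ^ 2)

/-- H¹ norm of a 2π-periodic function, via Fourier coefficients. -/
noncomputable def nH1 (f : ℝ → ℂ) : ℝ :=
  Real.sqrt (∑' n : ℤ, (1 + (n : ℝ) ^ 2) * ‖fCoef f n‖ ^ 2)

/- ## Auxiliary lemmas -/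

lemma cs_summable {a b : ℤ → ℝ} (ha0 : ∀ n, 0 ≤ a n) (hb0 : ∀ n, 0 ≤ b n)
    (ha : Summable fun n => a n ^ 2) (hb : Summable fun n => b n ^ 2) :
    Summable fun n => a n * b n := by
  refine Summable.of_nonneg_of_le (fun n => mul_nonneg (ha0 n) (hb0 n)) (fun n => ?_)
    ((ha.add hb).div_const 2)
  nlinarith [sq_nonneg (a n - b n)]

lemma cs_tsum {a b : ℤ → ℝ} (ha0 : ∀ n, 0 ≤ a n) (hb0 : ∀ n, 0 ≤ b n)
    (ha : Summable fun n => a n ^ 2) (hb : Summable fun n => b n ^ 2) :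
    ∑' n, a n * b n ≤ Real.sqrt (∑' n, a n ^ 2) * Real.sqrt (∑' n, b n ^ 2) := by
  rw [← Real.sqrt_mul (tsum_nonneg fun n => sq_nonneg _)]
  refine Summable.tsum_le_of_sum_le (cs_summable ha0 hb0 ha hb) fun s => ?_
  have h1 : (∑ n ∈ s, a n * b n) ^ 2 ≤ (∑ n ∈ s, a n ^ 2) * ∑ n ∈ s, b n ^ 2 :=
    Finset.sum_mul_sq_le_sq_mul_sq s a b
  have h2 : (0:ℝ) ≤ ∑ n ∈ s, a n * b n :=
    Finset.sum_nonneg fun n _ => mul_nonneg (ha0 n) (hb0 n)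
  refine (Real.le_sqrt h2 (mul_nonneg (tsum_nonneg fun _ => sq_nonneg _)
    (tsum_nonneg fun _ => sq_nonneg _))).2 (h1.trans ?_)
  exact mul_le_mul (Summable.sum_le_tsum s (fun n _ => sq_nonneg _) ha)
    (Summable.sum_le_tsum s (fun n _ => sq_nonneg _) hb)
    (Finset.sum_nonneg fun n _ => sq_nonneg _) (tsum_nonneg fun _ => sq_nonneg _)

lemma two_pi_fact : Fact (0 < 2 * π) := ⟨by positivity⟩

lemma fCoef_lift (h : ℝ → ℂ) (m : ℤ) :
    haveI := two_pi_fact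
    fourierCoeff (AddCircle.liftIco (2*π) 0 h) m = fCoef h m := by
  haveI := two_pi_fact
  rw [fourierCoeff_liftIco_eq h m, fourierCoeffOn_eq_integral]
  simp only [zero_add, sub_zero, fourier_coe_apply, smul_eq_mul, Complex.real_smul]
  rw [fCoef]
  congr 1
  · push_cast; norm_num
  · refine intervalIntegral.integral_congr fun x _ => ?_
    rw [mul_comm]
    have hπ : (π:ℂ) ≠ 0 := by exact_mod_cast Real.pi_ne_zero
    congr 1
    push_cast
    congr 1
    rw [div_eq_iff (by simp [hπ] : (2*(π:ℂ)) ≠ 0)]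
    ring

lemma liftIco_mul2 (f g : ℝ → ℂ) :
    haveI := two_pi_fact
    (fun z => AddCircle.liftIco (2*π) 0 f z * AddCircle.liftIco (2*π) 0 g z)
      = AddCircle.liftIco (2*π) 0 (fun x => f x * g x) := by
  haveI := two_pi_fact
  funext z
  obtain ⟨b, hb, rfl⟩ := AddCircle.eq_coe_Ico z
  rw [AddCircle.liftIco_zero_coe_apply hb, AddCircle.liftIco_zero_coe_apply hb,
    AddCircle.liftIco_zero_coe_apply hb]

lemma liftIco_comp (Φ : ℂ → ℂ) (f : ℝ → ℂ) :
    haveI := two_pi_fact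
    (fun z => Φ (AddCircle.liftIco (2*π) 0 f z)) = AddCircle.liftIco (2*π) 0 (fun x => Φ (f x)) := by
  haveI := two_pi_fact
  funext z
  obtain ⟨b, hb, rfl⟩ := AddCircle.eq_coe_Ico z
  rw [AddCircle.liftIco_zero_coe_apply hb, AddCircle.liftIco_zero_coe_apply hb]

lemma lift_continuous {h : ℝ → ℂ} (hc : Continuous h) (hp : ∀ x, h (x + 2*π) = h x) :
    haveI := two_pi_fact
    Continuous (AddCircle.liftIco (2*π) 0 h) := by
  haveI := two_pi_fact
  refine AddCircle.liftIco_zero_continuous ?_ hc.continuousOn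
  have := hp 0; rw [zero_add] at this; exact this.symm

lemma parseval_per {h : ℝ → ℂ} (hc : Continuous h) (hp : ∀ x, h (x + 2*π) = h x) :
    ∑' n : ℤ, ‖fCoef h n‖ ^ 2 = (1 / (2 * π)) * ∫ x in (0:ℝ)..(2 * π), ‖h x‖ ^ 2 := by
  haveI := two_pi_fact
  set H : AddCircle (2*π) → ℂ := AddCircle.liftIco (2*π) 0 h with hH
  have hHc : Continuous H := lift_continuous hc hp
  set W : Lp ℂ 2 (AddCircle.haarAddCircle (T := 2*π)) :=
    ContinuousMap.toLp (E := ℂ) 2 AddCircle.haarAddCircle ℂ ⟨H, hHc⟩ with hW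
  have hae : (W : AddCircle (2*π) → ℂ) =ᵐ[AddCircle.haarAddCircle] H :=
    ContinuousMap.coeFn_toLp (p := 2) (𝕜 := ℂ) AddCircle.haarAddCircle ⟨H, hHc⟩
  have h1 := tsum_sq_fourierCoeff W
  have hcoef : ∀ n : ℤ, fourierCoeff (W : AddCircle (2*π) → ℂ) n = fCoef h n := by
    intro n
    rw [show fourierCoeff (W : AddCircle (2*π) → ℂ) n = fourierCoeff H n from
      integral_congr_ae (hae.mono fun z hz => by simp only [hz]), hH, fCoef_lift]
  have h2 : ∫ t, ‖(W : AddCircle (2*π) → ℂ) t‖ ^ 2 ∂AddCircle.haarAddCircle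
      = ∫ t, ‖H t‖ ^ 2 ∂AddCircle.haarAddCircle :=
    integral_congr_ae (hae.mono fun z hz => by simp only [hz])
  rw [h2] at h1
  simp_rw [hcoef] at h1
  rw [h1]
  have key : ((∫ t, ‖H t‖ ^ 2 ∂AddCircle.haarAddCircle : ℝ) : ℂ)
      = fCoef (fun x => ((‖h x‖ ^ 2 : ℝ) : ℂ)) 0 := by
    rw [← fCoef_lift, ← liftIco_comp (fun w => ((‖w‖ ^ 2 : ℝ) : ℂ)) h]
    rw [fourierCoeff]
    simp only [neg_zero, fourier_zero, one_smul]
    exact (integral_ofReal).symm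
  have key2 : fCoef (fun x => ((‖h x‖ ^ 2 : ℝ) : ℂ)) 0
      = (((1 / (2 * π)) * ∫ x in (0:ℝ)..(2 * π), ‖h x‖ ^ 2 : ℝ) : ℂ) := by
    rw [fCoef]
    simp only [Int.cast_zero, mul_zero, zero_mul, Complex.exp_zero, mul_one]
    rw [intervalIntegral.integral_ofReal]
    push_cast
    ring
  have := key.trans key2
  exact_mod_cast this

local notation "⟪" x ", " y "⟫" => @inner ℂ _ _ x y

set_option maxHeartbeats 800000 in
lemma endpoints {f g : ℝ → ℂ} (k : ℤ) (hfc : Continuous f) (hgc : Continuous g)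
    (hfp : ∀ x, f (x + 2 * π) = f x) (hgp : ∀ x, g (x + 2 * π) = g x)
    (hfim : ∀ x, (f x).im = 0)
    (hf1 : Summable (fun n : ℤ => (1 + (n : ℝ) ^ 2) * ‖fCoef f n‖ ^ 2))
    (hg1 : Summable (fun n : ℤ => (1 + (n : ℝ) ^ 2) * ‖fCoef g n‖ ^ 2)) :
    ‖fCoef (fun x => f x * g x) (-k)‖ ≤ nL2 f * nL2 g ∧
    Real.sqrt (1 + (k:ℝ) ^ 2) * ‖fCoef (fun x => f x * g x) (-k)‖
      ≤ Real.sqrt 2 * (nH1 f * nH1 g) := by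
  haveI := two_pi_fact
  set F : AddCircle (2*π) → ℂ := AddCircle.liftIco (2*π) 0 f with hF
  set G : AddCircle (2*π) → ℂ := AddCircle.liftIco (2*π) 0 g with hG
  have hFc : Continuous F := lift_continuous hfc hfp
  have hGc : Continuous G := lift_continuous hgc hgp
  set u : C(AddCircle (2*π), ℂ) := ⟨F, hFc⟩ * fourier (-k) with hu
  set v : C(AddCircle (2*π), ℂ) := ⟨G, hGc⟩ with hv
  set U : Lp ℂ 2 (AddCircle.haarAddCircle (T := 2*π)) :=
    ContinuousMap.toLp (E := ℂ) 2 AddCircle.haarAddCircle ℂ u with hUdef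
  set V : Lp ℂ 2 (AddCircle.haarAddCircle (T := 2*π)) :=
    ContinuousMap.toLp (E := ℂ) 2 AddCircle.haarAddCircle ℂ v with hVdef
  have haeU : (U : AddCircle (2*π) → ℂ) =ᵐ[AddCircle.haarAddCircle] u :=
    ContinuousMap.coeFn_toLp (p := 2) (𝕜 := ℂ) AddCircle.haarAddCircle u
  have haeV : (V : AddCircle (2*π) → ℂ) =ᵐ[AddCircle.haarAddCircle] v :=
    ContinuousMap.coeFn_toLp (p := 2) (𝕜 := ℂ) AddCircle.haarAddCircle v
  have hconjF : ∀ z, (starRingEnd ℂ) (F z) = F z := by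
    intro z
    have h1 := congrFun (liftIco_comp (fun w => (starRingEnd ℂ) w) f) z
    have hcf : (fun x => (starRingEnd ℂ) (f x)) = f :=
      funext fun x => Complex.conj_eq_iff_im.2 (hfim x)
    rw [← hF] at h1
    rw [h1, hcf, ← hF]
  have hUV : ⟪U, V⟫ = fCoef (fun x => f x * g x) (-k) := by
    rw [hUdef, hVdef, ContinuousMap.inner_toLp]
    rw [← fCoef_lift, ← liftIco_mul2, ← hF, ← hG]
    rw [fourierCoeff]
    refine integral_congr_ae (Eventually.of_forall fun z => ?_)
    show v z * (starRingEnd ℂ) (u z) = fourier (-(-k)) z • (F z * G z)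
    simp only [hu, hv, ContinuousMap.mul_apply, ContinuousMap.coe_mk, map_mul,
      hconjF z, fourier_neg, Complex.conj_conj, smul_eq_mul, neg_neg]
    ring
  have hcU : ∀ n : ℤ, fourierCoeff (U : AddCircle (2*π) → ℂ) n = fCoef f (n + k) := by
    intro n
    have s1 : fourierCoeff (U : AddCircle (2*π) → ℂ) n = fourierCoeff (⇑u) n :=
      integral_congr_ae (haeU.mono fun z hz => by simp only [hz])
    have s2 : fourierCoeff (⇑u) n = fourierCoeff F (n + k) := by
      rw [fourierCoeff, fourierCoeff]
      refine integral_congr_ae (Eventually.of_forall fun z => ?_)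
      show fourier (-n) z • u z = fourier (-(n+k)) z • F z
      simp only [hu, ContinuousMap.mul_apply, ContinuousMap.coe_mk, smul_eq_mul,
        neg_add, fourier_add]
      ring
    rw [s1, s2, hF, fCoef_lift]
  have hcV : ∀ n : ℤ, fourierCoeff (V : AddCircle (2*π) → ℂ) n = fCoef g n := by
    intro n
    have s1 : fourierCoeff (V : AddCircle (2*π) → ℂ) n = fourierCoeff G n :=
      integral_congr_ae (haeV.mono fun z hz => by simp only [hz, hv, ContinuousMap.coe_mk])
    rw [s1, hG, fCoef_lift]
  have HS : HasSum (fun n : ℤ => ⟪U, fourierBasis n⟫ * ⟪fourierBasis n, V⟫) ⟪U, V⟫ :=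
    HilbertBasis.hasSum_inner_mul_inner fourierBasis U V
  have hterm : ∀ n : ℤ, ‖⟪U, fourierBasis n⟫ * ⟪fourierBasis n, V⟫‖
      = ‖fCoef f (n + k)‖ * ‖fCoef g n‖ := by
    intro n
    rw [norm_mul]
    congr 1
    · rw [norm_inner_symm, ← HilbertBasis.repr_apply_apply, fourierBasis_repr, hcU]
    · rw [← HilbertBasis.repr_apply_apply, fourierBasis_repr, hcV]
  have sumf2 : Summable (fun m : ℤ => ‖fCoef f m‖ ^ 2) :=
    Summable.of_nonneg_of_le (fun m => sq_nonneg _)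
      (fun m => le_mul_of_one_le_left (sq_nonneg _) (by nlinarith [sq_nonneg ((m:ℝ))])) hf1
  have sumg2 : Summable (fun m : ℤ => ‖fCoef g m‖ ^ 2) :=
    Summable.of_nonneg_of_le (fun m => sq_nonneg _)
      (fun m => le_mul_of_one_le_left (sq_nonneg _) (by nlinarith [sq_nonneg ((m:ℝ))])) hg1
  have sumaF2 : Summable (fun n : ℤ => ‖fCoef f (n + k)‖ ^ 2) := by
    have h := (Equiv.addRight k).summable_iff.2 sumf2
    simpa only [Function.comp_def, Equiv.coe_addRight] using h
  have hab_sum : Summable (fun n : ℤ => ‖fCoef f (n + k)‖ * ‖fCoef g n‖) :=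
    cs_summable (fun _ => norm_nonneg _) (fun _ => norm_nonneg _) sumaF2 sumg2
  have hPle : ‖fCoef (fun x => f x * g x) (-k)‖
      ≤ ∑' n : ℤ, ‖fCoef f (n + k)‖ * ‖fCoef g n‖ := by
    have hsn : Summable fun n : ℤ => ‖⟪U, fourierBasis n⟫ * ⟪fourierBasis n, V⟫‖ :=
      (summable_congr hterm).2 hab_sum
    calc ‖fCoef (fun x => f x * g x) (-k)‖
        = ‖∑' n : ℤ, ⟪U, fourierBasis n⟫ * ⟪fourierBasis n, V⟫‖ := by rw [HS.tsum_eq, hUV]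
      _ ≤ ∑' n : ℤ, ‖⟪U, fourierBasis n⟫ * ⟪fourierBasis n, V⟫‖ := norm_tsum_le_tsum_norm hsn
      _ = ∑' n : ℤ, ‖fCoef f (n + k)‖ * ‖fCoef g n‖ := tsum_congr hterm
  have hsqf : Real.sqrt (∑' n : ℤ, ‖fCoef f (n + k)‖ ^ 2) = nL2 f := by
    have h := (Equiv.addRight k).tsum_eq (fun m => ‖fCoef f m‖ ^ 2)
    simp only [Equiv.coe_addRight] at h
    rw [h, parseval_per hfc hfp]
    rfl
  have hsqg : Real.sqrt (∑' n : ℤ, ‖fCoef g n‖ ^ 2) = nL2 g := by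
    rw [parseval_per hgc hgp]; rfl
  constructor
  · refine hPle.trans ((cs_tsum (fun _ => norm_nonneg _) (fun _ => norm_nonneg _)
      sumaF2 sumg2).trans_eq ?_)
    rw [hsqf, hsqg]
  · -- E1
    have hw1sum : Summable (fun n : ℤ => (1 + ((n + k : ℤ) : ℝ) ^ 2) * ‖fCoef f (n + k)‖ ^ 2) := by
      have h := (Equiv.addRight k).summable_iff.2 hf1
      simpa only [Function.comp_def, Equiv.coe_addRight] using h
    have hw1sq : ∀ n : ℤ, (Real.sqrt (1 + ((n + k : ℤ) : ℝ) ^ 2) * ‖fCoef f (n + k)‖) ^ 2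
        = (1 + ((n + k : ℤ) : ℝ) ^ 2) * ‖fCoef f (n + k)‖ ^ 2 := fun n => by
      rw [mul_pow, Real.sq_sqrt (by positivity)]
    have hw2sq : ∀ n : ℤ, (Real.sqrt (1 + (n : ℝ) ^ 2) * ‖fCoef g n‖) ^ 2
        = (1 + (n : ℝ) ^ 2) * ‖fCoef g n‖ ^ 2 := fun n => by
      rw [mul_pow, Real.sq_sqrt (by positivity)]
    have hw1s : Summable (fun n : ℤ =>
        (Real.sqrt (1 + ((n + k : ℤ) : ℝ) ^ 2) * ‖fCoef f (n + k)‖) ^ 2) := by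
      simp_rw [hw1sq]; exact hw1sum
    have hw2s : Summable (fun n : ℤ =>
        (Real.sqrt (1 + (n : ℝ) ^ 2) * ‖fCoef g n‖) ^ 2) := by
      simp_rw [hw2sq]; exact hg1
    have hw12 : Summable (fun n : ℤ =>
        (Real.sqrt (1 + ((n + k : ℤ) : ℝ) ^ 2) * ‖fCoef f (n + k)‖)
          * (Real.sqrt (1 + (n : ℝ) ^ 2) * ‖fCoef g n‖)) :=
      cs_summable (fun n => mul_nonneg (Real.sqrt_nonneg _) (norm_nonneg _))
        (fun n => mul_nonneg (Real.sqrt_nonneg _) (norm_nonneg _)) hw1s hw2s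
    have point : ∀ n : ℤ, Real.sqrt (1 + (k:ℝ) ^ 2) * (‖fCoef f (n + k)‖ * ‖fCoef g n‖)
        ≤ Real.sqrt 2 * ((Real.sqrt (1 + ((n + k : ℤ) : ℝ) ^ 2) * ‖fCoef f (n + k)‖)
          * (Real.sqrt (1 + (n : ℝ) ^ 2) * ‖fCoef g n‖)) := by
      intro n
      have h12 : Real.sqrt (1 + (k:ℝ) ^ 2)
          ≤ Real.sqrt 2 * (Real.sqrt (1 + ((n + k : ℤ) : ℝ) ^ 2)
            * Real.sqrt (1 + (n : ℝ) ^ 2)) := by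
        rw [← Real.sqrt_mul (by positivity : (0:ℝ) ≤ (1 + ((n + k : ℤ) : ℝ) ^ 2)),
          ← Real.sqrt_mul (by norm_num : (0:ℝ) ≤ 2)]
        refine Real.sqrt_le_sqrt ?_
        push_cast
        nlinarith [sq_nonneg ((n:ℝ) + (k:ℝ)), sq_nonneg ((n:ℝ)),
          sq_nonneg (((n:ℝ) + (k:ℝ)) * (n:ℝ))]
      calc Real.sqrt (1 + (k:ℝ) ^ 2) * (‖fCoef f (n + k)‖ * ‖fCoef g n‖)
          ≤ (Real.sqrt 2 * (Real.sqrt (1 + ((n + k : ℤ) : ℝ) ^ 2)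
            * Real.sqrt (1 + (n : ℝ) ^ 2))) * (‖fCoef f (n + k)‖ * ‖fCoef g n‖) :=
            mul_le_mul_of_nonneg_right h12 (mul_nonneg (norm_nonneg _) (norm_nonneg _))
        _ = Real.sqrt 2 * ((Real.sqrt (1 + ((n + k : ℤ) : ℝ) ^ 2) * ‖fCoef f (n + k)‖)
            * (Real.sqrt (1 + (n : ℝ) ^ 2) * ‖fCoef g n‖)) := by ring
    have hsqH1f : Real.sqrt (∑' n : ℤ,
        (Real.sqrt (1 + ((n + k : ℤ) : ℝ) ^ 2) * ‖fCoef f (n + k)‖) ^ 2) = nH1 f := by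
      rw [show (∑' n : ℤ, (Real.sqrt (1 + ((n + k : ℤ) : ℝ) ^ 2) * ‖fCoef f (n + k)‖) ^ 2)
          = ∑' n : ℤ, (1 + ((n + k : ℤ) : ℝ) ^ 2) * ‖fCoef f (n + k)‖ ^ 2 from
        tsum_congr hw1sq]
      have h := (Equiv.addRight k).tsum_eq (fun m => (1 + (m : ℝ) ^ 2) * ‖fCoef f m‖ ^ 2)
      simp only [Equiv.coe_addRight] at h
      rw [h]
      rfl
    have hsqH1g : Real.sqrt (∑' n : ℤ,
        (Real.sqrt (1 + (n : ℝ) ^ 2) * ‖fCoef g n‖) ^ 2) = nH1 g := by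
      rw [show (∑' n : ℤ, (Real.sqrt (1 + (n : ℝ) ^ 2) * ‖fCoef g n‖) ^ 2)
          = ∑' n : ℤ, (1 + (n : ℝ) ^ 2) * ‖fCoef g n‖ ^ 2 from tsum_congr hw2sq]
      rfl
    calc Real.sqrt (1 + (k:ℝ) ^ 2) * ‖fCoef (fun x => f x * g x) (-k)‖
        ≤ Real.sqrt (1 + (k:ℝ) ^ 2) * ∑' n : ℤ, ‖fCoef f (n + k)‖ * ‖fCoef g n‖ :=
          mul_le_mul_of_nonneg_left hPle (Real.sqrt_nonneg _)
      _ = ∑' n : ℤ, Real.sqrt (1 + (k:ℝ) ^ 2) * (‖fCoef f (n + k)‖ * ‖fCoef g n‖) :=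
          tsum_mul_left.symm
      _ ≤ ∑' n : ℤ, Real.sqrt 2 * ((Real.sqrt (1 + ((n + k : ℤ) : ℝ) ^ 2) * ‖fCoef f (n + k)‖)
            * (Real.sqrt (1 + (n : ℝ) ^ 2) * ‖fCoef g n‖)) :=
          Summable.tsum_le_tsum point (hab_sum.mul_left _) (hw12.mul_left _)
      _ = Real.sqrt 2 * ∑' n : ℤ, ((Real.sqrt (1 + ((n + k : ℤ) : ℝ) ^ 2) * ‖fCoef f (n + k)‖)
            * (Real.sqrt (1 + (n : ℝ) ^ 2) * ‖fCoef g n‖)) := tsum_mul_left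
      _ ≤ Real.sqrt 2 * (nH1 f * nH1 g) := by
          refine mul_le_mul_of_nonneg_left ?_ (Real.sqrt_nonneg _)
          rw [← hsqH1f, ← hsqH1g]
          exact cs_tsum (fun n => mul_nonneg (Real.sqrt_nonneg _) (norm_nonneg _))
            (fun n => mul_nonneg (Real.sqrt_nonneg _) (norm_nonneg _)) hw1s hw2s

/-- Lemma 4.9: `|⟨f e_k, g⟩|² ≲ (1 ∧ |k|^{-2ν}) (‖f‖‖g‖)^{2-2ν} (‖f‖_{H¹}‖g‖_{H¹})^{2ν}`. -/
theorem stmt_1 :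
    ∃ C : ℝ, 0 < C ∧ ∀ (f g : ℝ → ℂ) (ν : ℝ) (k : ℤ),
      Continuous f → Continuous g →
      (∀ x, f (x + 2 * π) = f x) → (∀ x, g (x + 2 * π) = g x) →
      (∀ x, (f x).im = 0) → (∀ x, (g x).im = 0) →
      Summable (fun n : ℤ => (1 + (n : ℝ) ^ 2) * ‖fCoef f n‖ ^ 2) →
      Summable (fun n : ℤ => (1 + (n : ℝ) ^ 2) * ‖fCoef g n‖ ^ 2) →
      0 ≤ ν → ν ≤ 1 →
      ‖(1 / (2 * π) : ℂ) * ∫ x in (0:ℝ)..(2 * π),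
          f x * Complex.exp (Complex.I * k * x) * (starRingEnd ℂ) (g x)‖ ^ 2 ≤
        C * (if k = 0 then 1 else |(k : ℝ)| ^ (-(2 * ν))) *
          (nL2 f * nL2 g) ^ (2 - 2 * ν) * (nH1 f * nH1 g) ^ (2 * ν) := by
  refine ⟨2, by norm_num, fun f g ν k hfc hgc hfp hgp hfim hgim hf1 hg1 hν0 hν1 => ?_⟩
  -- Step 1: identify the LHS with `fCoef (f*g) (-k)`
  have hP : (1 / (2 * π) : ℂ) * (∫ x in (0:ℝ)..(2 * π),
      f x * Complex.exp (Complex.I * k * x) * (starRingEnd ℂ) (g x))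
      = fCoef (fun x => f x * g x) (-k) := by
    rw [fCoef]
    congr 1
    refine intervalIntegral.integral_congr fun x _ => ?_
    rw [Complex.conj_eq_iff_im.2 (hgim x)]
    push_cast
    ring_nf
  rw [hP]
  obtain ⟨hE0, hE1⟩ := endpoints k hfc hgc hfp hgp hfim hf1 hg1
  set P : ℝ := ‖fCoef (fun x => f x * g x) (-k)‖ with hPdef
  have hP0 : 0 ≤ P := norm_nonneg _
  have hL0 : 0 ≤ nL2 f * nL2 g := mul_nonneg (Real.sqrt_nonneg _) (Real.sqrt_nonneg _)
  have hH0 : 0 ≤ nH1 f * nH1 g := mul_nonneg (Real.sqrt_nonneg _) (Real.sqrt_nonneg _)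
  -- endpoint bounds squared
  have hA : P ^ 2 ≤ (nL2 f * nL2 g) ^ 2 := pow_le_pow_left₀ hP0 hE0 2
  have hB : P ^ 2 ≤ 2 * (1 + (k:ℝ) ^ 2)⁻¹ * (nH1 f * nH1 g) ^ 2 := by
    have h1 : (1 + (k:ℝ) ^ 2) * P ^ 2 ≤ 2 * (nH1 f * nH1 g) ^ 2 := by
      have := mul_self_le_mul_self (by positivity) hE1
      calc (1 + (k:ℝ) ^ 2) * P ^ 2
          = (Real.sqrt (1 + (k:ℝ) ^ 2) * P) * (Real.sqrt (1 + (k:ℝ) ^ 2) * P) := by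
            rw [show (Real.sqrt (1 + (k:ℝ) ^ 2) * P) * (Real.sqrt (1 + (k:ℝ) ^ 2) * P)
              = (Real.sqrt (1 + (k:ℝ) ^ 2) * Real.sqrt (1 + (k:ℝ) ^ 2)) * (P * P) from by ring,
              Real.mul_self_sqrt (by positivity)]
            ring
        _ ≤ (Real.sqrt 2 * (nH1 f * nH1 g)) * (Real.sqrt 2 * (nH1 f * nH1 g)) := this
        _ = (Real.sqrt 2 * Real.sqrt 2) * (nH1 f * nH1 g) ^ 2 := by ring
        _ = 2 * (nH1 f * nH1 g) ^ 2 := by rw [Real.mul_self_sqrt (by norm_num)]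
    have hk0 : (0:ℝ) < 1 + (k:ℝ) ^ 2 := by positivity
    rw [show 2 * (1 + (k:ℝ) ^ 2)⁻¹ * (nH1 f * nH1 g) ^ 2
      = (2 * (nH1 f * nH1 g) ^ 2) / (1 + (k:ℝ) ^ 2) from by ring]
    rw [le_div_iff₀ hk0]
    linarith [h1]
  -- interpolation
  have hinterp : P ^ 2 ≤ ((nL2 f * nL2 g) ^ 2) ^ (1 - ν)
      * (2 * (1 + (k:ℝ) ^ 2)⁻¹ * (nH1 f * nH1 g) ^ 2) ^ ν := by
    rcases eq_or_lt_of_le hP0 with h0 | hpos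
    · have : P ^ 2 = 0 := by rw [← h0]; ring
      rw [this]
      positivity
    · have hx : (0:ℝ) < P ^ 2 := by positivity
      calc P ^ 2 = (P ^ 2) ^ (1 - ν) * (P ^ 2) ^ ν := by
            rw [← Real.rpow_add hx, sub_add_cancel, Real.rpow_one]
        _ ≤ ((nL2 f * nL2 g) ^ 2) ^ (1 - ν)
            * (2 * (1 + (k:ℝ) ^ 2)⁻¹ * (nH1 f * nH1 g) ^ 2) ^ ν :=
            mul_le_mul (Real.rpow_le_rpow hx.le hA (by linarith))
              (Real.rpow_le_rpow hx.le hB hν0)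
              (Real.rpow_nonneg hx.le _) (Real.rpow_nonneg (by positivity) _)
  refine hinterp.trans ?_
  -- now pure arithmetic with rpow
  have e1 : ((nL2 f * nL2 g) ^ 2) ^ (1 - ν) = (nL2 f * nL2 g) ^ (2 - 2 * ν) := by
    rw [← Real.rpow_natCast (nL2 f * nL2 g) 2, ← Real.rpow_mul hL0]
    congr 1
    push_cast
    ring
  have e2 : ((nH1 f * nH1 g) ^ 2 : ℝ) ^ ν = (nH1 f * nH1 g) ^ (2 * ν) := by
    rw [← Real.rpow_natCast (nH1 f * nH1 g) 2, ← Real.rpow_mul hH0]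
    norm_num
  have hm0 : (0:ℝ) ≤ (1 + (k:ℝ) ^ 2)⁻¹ := by positivity
  have e3 : (2 * (1 + (k:ℝ) ^ 2)⁻¹ * (nH1 f * nH1 g) ^ 2) ^ ν
      = 2 ^ ν * ((1 + (k:ℝ) ^ 2)⁻¹) ^ ν * (nH1 f * nH1 g) ^ (2 * ν) := by
    rw [Real.mul_rpow (by positivity) (by positivity), Real.mul_rpow (by norm_num) hm0, e2]
  rw [e1, e3]
  have h2ν : (2:ℝ) ^ ν ≤ 2 := by
    calc (2:ℝ) ^ ν ≤ 2 ^ (1:ℝ) := Real.rpow_le_rpow_of_exponent_le (by norm_num) hν1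
      _ = 2 := Real.rpow_one 2
  have hmν : ((1 + (k:ℝ) ^ 2)⁻¹) ^ ν ≤ (if k = 0 then (1:ℝ) else |(k : ℝ)| ^ (-(2 * ν))) := by
    by_cases hk : k = 0
    · simp [hk]
    · simp only [hk, if_false]
      have hkabs : (1:ℝ) ≤ |(k:ℝ)| := by
        have : (1:ℤ) ≤ |k| := Int.one_le_abs (by exact_mod_cast hk)
        calc (1:ℝ) ≤ (|k| : ℤ) := by exact_mod_cast this
          _ = |(k:ℝ)| := by push_cast; rfl
      have hkpos : (0:ℝ) < |(k:ℝ)| := by linarith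
      have step : ((1 + (k:ℝ) ^ 2)⁻¹) ≤ |(k:ℝ)| ^ (-(2:ℝ)) := by
        rw [Real.rpow_neg hkpos.le, Real.rpow_two]
        rw [inv_le_inv₀ (by positivity) (pow_pos hkpos 2), sq_abs]
        linarith
      calc ((1 + (k:ℝ) ^ 2)⁻¹) ^ ν ≤ (|(k:ℝ)| ^ (-(2:ℝ))) ^ ν :=
            Real.rpow_le_rpow hm0 step hν0
        _ = |(k:ℝ)| ^ (-(2 * ν)) := by
            rw [← Real.rpow_mul hkpos.le]
            ring_nf
  have hif0 : (0:ℝ) ≤ (if k = 0 then (1:ℝ) else |(k : ℝ)| ^ (-(2 * ν))) := by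
    by_cases hk : k = 0 <;> simp [hk]
    positivity
  calc (nL2 f * nL2 g) ^ (2 - 2 * ν) * (2 ^ ν * ((1 + (k:ℝ) ^ 2)⁻¹) ^ ν
        * (nH1 f * nH1 g) ^ (2 * ν))
      ≤ (nL2 f * nL2 g) ^ (2 - 2 * ν) * (2 * (if k = 0 then (1:ℝ) else |(k : ℝ)| ^ (-(2 * ν)))
        * (nH1 f * nH1 g) ^ (2 * ν)) := by
        refine mul_le_mul_of_nonneg_left ?_ (Real.rpow_nonneg hL0 _)
        refine mul_le_mul_of_nonneg_right ?_ (Real.rpow_nonneg hH0 _)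
        exact mul_le_mul h2ν hmν (Real.rpow_nonneg hm0 _) (by norm_num)
    _ = 2 * (if k = 0 then (1:ℝ) else |(k : ℝ)| ^ (-(2 * ν)))
        * (nL2 f * nL2 g) ^ (2 - 2 * ν) * (nH1 f * nH1 g) ^ (2 * ν) := by ring
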